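/- For continuous positive functions f, g on [a,b] with a ≤ b, and s ∈ [0,1], the star-integral of s·f(x) + (1-s)·g(x) over [a,b] is greater than or equal to the product of the star-integral of f(x)^s over [a,b] and the star-integral of g(x)^{1-s} over [a,b]. -/
import Mathlib


theorem star_integral_holder (a b : ℝ) (hab : a ≤ b) (f g : ℝ → ℝ) (s : ℝ)
    (hs : s ∈ Set.Icc (0 : ℝ) 1)
    (hf : ContinuousOn f (Set.Icc a b)) (hg : ContinuousOn g (Set.Icc a b))
    (hfpos : ∀ x ∈ Set.Icc a b, 0 < f x) (hgpos : ∀ x ∈ Set.Icc a b, 0 < g x) :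
    Real.exp (∫ x in a..b, Real.log (s * f x + (1 - s) * g x))
      ≥ Real.exp (∫ x in a..b, Real.log (f x ^ s))
        * Real.exp (∫ x in a..b, Real.log (g x ^ (1 - s))) := by
  obtain ⟨hs0, hs1⟩ := hs
  rw [← Real.exp_add, ge_iff_le, Real.exp_le_exp]
  have hI : Set.uIcc a b = Set.Icc a b := Set.uIcc_of_le hab
  -- rewrite log (f x ^ s) as s * log (f x)
  have h1 : (∫ x in a..b, Real.log (f x ^ s)) = ∫ x in a..b, s * Real.log (f x) := by
    apply intervalIntegral.integral_congr
    intro x hx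
    rw [hI] at hx
    exact Real.log_rpow (hfpos x hx) s
  have h2 : (∫ x in a..b, Real.log (g x ^ (1 - s)))
      = ∫ x in a..b, (1 - s) * Real.log (g x) := by
    apply intervalIntegral.integral_congr
    intro x hx
    rw [hI] at hx
    exact Real.log_rpow (hgpos x hx) (1 - s)
  rw [h1, h2]
  have cf : ContinuousOn (fun x => s * Real.log (f x)) (Set.Icc a b) :=
    ContinuousOn.mul continuousOn_const
      (Real.continuousOn_log.comp hf (fun x hx => ne_of_gt (hfpos x hx)))
  have cg : ContinuousOn (fun x => (1 - s) * Real.log (g x)) (Set.Icc a b) :=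
    ContinuousOn.mul continuousOn_const
      (Real.continuousOn_log.comp hg (fun x hx => ne_of_gt (hgpos x hx)))
  have ch : ContinuousOn (fun x => Real.log (s * f x + (1 - s) * g x)) (Set.Icc a b) := by
    apply Real.continuousOn_log.comp
      ((continuousOn_const.mul hf).add (continuousOn_const.mul hg))
    intro x hx
    have h1 := hfpos x hx
    have h2 := hgpos x hx
    have hpos : 0 < s * f x + (1 - s) * g x := by
      rcases lt_or_eq_of_le hs1 with h | h
      · exact add_pos_of_nonneg_of_pos (mul_nonneg hs0 h1.le) (mul_pos (by linarith) h2)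
      · rw [h]; simpa using h1
    exact hpos.ne'
  have hif : IntervalIntegrable (fun x => s * Real.log (f x)) MeasureTheory.volume a b :=
    (cf.mono (by rw [hI])).intervalIntegrable
  have hig : IntervalIntegrable (fun x => (1 - s) * Real.log (g x)) MeasureTheory.volume a b :=
    (cg.mono (by rw [hI])).intervalIntegrable
  have hih : IntervalIntegrable (fun x => Real.log (s * f x + (1 - s) * g x))
      MeasureTheory.volume a b :=
    (ch.mono (by rw [hI])).intervalIntegrable
  rw [← intervalIntegral.integral_add hif hig]
  apply intervalIntegral.integral_mono_on hab (hif.add hig) hih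
  intro x hx
  have hconc := strictConcaveOn_log_Ioi.concaveOn
  have := hconc.2 (Set.mem_Ioi.mpr (hfpos x hx)) (Set.mem_Ioi.mpr (hgpos x hx))
    hs0 (by linarith : (0:ℝ) ≤ 1 - s) (by ring)
  simpa [smul_eq_mul] using this
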